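/- Let σ > 0 and let k(x, y) = (1 + ‖x − y‖²/σ²)^{−2} be the rational quadratic kernel on ℝⁿ. Then the functions k♯(x, y) := (σ²/2)(1 + ‖x − y‖²/σ²)^{−1} and k♭(x, y) := (4/σ²)(1 + ‖x − y‖²/σ²)^{−3} satisfy, for all x, y ∈ ℝⁿ: ∇ₓ k♯(x, y) = k(x, y)(y − x) and ∇ₓ k(x, y) = k♭(x, y)(y − x). Equivalently, k♯ = (σ²/2) k^{1/2} and k♭ = (4/σ²) k^{3/2}. -/

import Mathlib

noncomputable section

open InnerProductSpace

private lemma aux_grad {n : ℕ} (σ : ℝ) (hσ : 0 < σ) (c : ℝ) (m : ℤ)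
    (x y : EuclideanSpace ℝ (Fin n)) :
    HasGradientAt (fun x' : EuclideanSpace ℝ (Fin n) =>
        c * (1 + ‖x' - y‖ ^ 2 / σ ^ 2) ^ m)
      ((c * m * (1 + ‖x - y‖ ^ 2 / σ ^ 2) ^ (m - 1) * (2 / σ ^ 2)) • (x - y)) x := by
  have hu : (0:ℝ) < 1 + ‖x - y‖ ^ 2 / σ ^ 2 := by positivity
  -- derivative of the squared norm
  have h1 : HasFDerivAt (fun x' : EuclideanSpace ℝ (Fin n) => ‖x' - y‖ ^ 2)
      (2 • (innerSL ℝ (x - y))) x := by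
    simpa using ((hasFDerivAt_id x).sub_const y).norm_sq
  -- scalar function
  have h2 : HasDerivAt (fun t : ℝ => c * (1 + t / σ ^ 2) ^ m)
      (c * m * (1 + ‖x - y‖ ^ 2 / σ ^ 2) ^ (m - 1) * (1 / σ ^ 2)) (‖x - y‖ ^ 2) := by
    have hinner : HasDerivAt (fun t : ℝ => 1 + t / σ ^ 2) (1 / σ ^ 2) (‖x - y‖ ^ 2) := by
      simpa [div_eq_mul_inv] using
        ((hasDerivAt_id (‖x - y‖ ^ 2)).div_const (σ ^ 2)).const_add 1
    have := (HasDerivAt.comp (‖x - y‖ ^ 2)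
      (hasDerivAt_zpow m _ (Or.inl hu.ne')) hinner).const_mul c
    exact this.congr_deriv (by ring)
  have h3 := h2.comp_hasFDerivAt x h1
  rw [hasGradientAt_iff_hasFDerivAt]
  refine h3.congr_fderiv ?_
  ext v
  simp [toDual_apply_apply, inner_smul_left, real_inner_smul_left, smul_smul]
  ring

/-- **rational quadratic sharp and flat.** For the rational quadratic
kernel `k(x,y) = (1 + ‖x−y‖²/σ²)⁻²`, the functions
`k♯(x,y) = (σ²/2)(1 + ‖x−y‖²/σ²)⁻¹` and `k♭(x,y) = (4/σ²)(1 + ‖x−y‖²/σ²)⁻³` satisfy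
`∇ₓ k♯(x,y) = k(x,y)(y − x)` and `∇ₓ k(x,y) = k♭(x,y)(y − x)`; equivalently,
`k♯ = (σ²/2)·k^(1/2)` and `k♭ = (4/σ²)·k^(3/2)`. -/
theorem rational_quadratic_sharp_flat {n : ℕ} (σ : ℝ) (hσ : 0 < σ)
    (k ks kb : EuclideanSpace ℝ (Fin n) → EuclideanSpace ℝ (Fin n) → ℝ)
    (hk : ∀ x y : EuclideanSpace ℝ (Fin n),
      k x y = (1 + ‖x - y‖ ^ 2 / σ ^ 2) ^ (-2 : ℤ))
    (hks : ∀ x y, ks x y = σ ^ 2 / 2 * (1 + ‖x - y‖ ^ 2 / σ ^ 2) ^ (-1 : ℤ))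
    (hkb : ∀ x y, kb x y = 4 / σ ^ 2 * (1 + ‖x - y‖ ^ 2 / σ ^ 2) ^ (-3 : ℤ)) :
    (∀ x y : EuclideanSpace ℝ (Fin n),
      HasGradientAt (fun x' => ks x' y) (k x y • (y - x)) x ∧
      HasGradientAt (fun x' => k x' y) (kb x y • (y - x)) x) ∧
    (∀ x y : EuclideanSpace ℝ (Fin n),
      ks x y = σ ^ 2 / 2 * k x y ^ ((1 : ℝ) / 2) ∧
      kb x y = 4 / σ ^ 2 * k x y ^ ((3 : ℝ) / 2)) := by
  have hσ2 : (σ:ℝ) ^ 2 ≠ 0 := by positivity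
  constructor
  · intro x y
    have hu : (0:ℝ) < 1 + ‖x - y‖ ^ 2 / σ ^ 2 := by positivity
    constructor
    · have h := aux_grad σ hσ (σ ^ 2 / 2) (-1) x y
      have hfun : (fun x' : EuclideanSpace ℝ (Fin n) =>
          σ ^ 2 / 2 * (1 + ‖x' - y‖ ^ 2 / σ ^ 2) ^ (-1 : ℤ)) = fun x' => ks x' y := by
        funext x'; rw [hks]
      rw [hfun] at h
      convert h using 1
      rw [hk]
      have : (y - x : EuclideanSpace ℝ (Fin n)) = -(x - y) := by abel
      rw [this, smul_neg, ← neg_smul]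
      congr 1
      rw [show (-1 - 1 : ℤ) = -2 by ring]
      set A := (1 + ‖x - y‖ ^ 2 / σ ^ 2) ^ (-2 : ℤ) with hA
      push_cast
      field_simp
    · have h := aux_grad σ hσ 1 (-2) x y
      have hfun : (fun x' : EuclideanSpace ℝ (Fin n) =>
          1 * (1 + ‖x' - y‖ ^ 2 / σ ^ 2) ^ (-2 : ℤ)) = fun x' => k x' y := by
        funext x'; rw [hk, one_mul]
      rw [hfun] at h
      convert h using 1
      rw [hkb]
      have : (y - x : EuclideanSpace ℝ (Fin n)) = -(x - y) := by abel
      rw [this, smul_neg, ← neg_smul]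
      congr 1
      rw [show (-2 - 1 : ℤ) = -3 by ring]
      set A := (1 + ‖x - y‖ ^ 2 / σ ^ 2) ^ (-3 : ℤ) with hA
      push_cast
      field_simp
      ring
  · intro x y
    have hu : (0:ℝ) < 1 + ‖x - y‖ ^ 2 / σ ^ 2 := by positivity
    rw [hk, hks, hkb]
    have hcast : ((1 + ‖x - y‖ ^ 2 / σ ^ 2) ^ (-2 : ℤ) : ℝ)
        = (1 + ‖x - y‖ ^ 2 / σ ^ 2) ^ ((-2 : ℝ)) := by
      rw [← Real.rpow_intCast]; norm_num
    constructor
    · rw [hcast, ← Real.rpow_mul hu.le]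
      congr 1
      rw [← Real.rpow_intCast _ (-1)]
      norm_num
    · rw [hcast, ← Real.rpow_mul hu.le]
      congr 1
      rw [← Real.rpow_intCast _ (-3)]
      norm_num
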